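/- Let ε ∈ (0, 1/2) and let M, N be integers with 1 ≤ M < N. Let (X_n)_{n≥0} be a stochastic process on a probability space taking values in the nonnegative integers, adapted to a filtration (F_n)_{n≥0}, with X_0 = M almost surely, such that almost surely |X_{n+1} − X_n| = 1 on the event {X_n ≥ 1} and X_{n+1} = X_n + 1 on the event {X_n = 0}, and such that for every n the conditional probability satisfies P(X_{n+1} = X_n + 1 | F_n) ≤ 1/2 − ε almost surely on the event {X_n ≥ M}. Then the probability that the process reaches the value N strictly before reaching the value M − 1 is at most (1 − 2ε)^{N−M}. -/

import Mathlib

set_option maxHeartbeats 1000000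
open MeasureTheory

noncomputable def hitTime {Ω : Type*} (X : ℕ → Ω → ℕ) (v : ℕ) (ω : Ω) : ℕ∞ :=
  sInf {t : ℕ∞ | ∃ k : ℕ, (k : ℕ∞) = t ∧ X k ω = v}

lemma hitTime_le {Ω : Type*} {X : ℕ → Ω → ℕ} {v : ℕ} {ω : Ω} {k : ℕ} (hk : X k ω = v) :
    hitTime X v ω ≤ (k : ℕ∞) :=
  sInf_le ⟨k, rfl, hk⟩

lemma lt_hitTime {Ω : Type*} {X : ℕ → Ω → ℕ} {v : ℕ} {ω : Ω} {k : ℕ}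
    (h : ∀ j ≤ k, X j ω ≠ v) : (k : ℕ∞) < hitTime X v ω := by
  refine lt_of_lt_of_le (b := (k : ℕ∞) + 1) (by exact_mod_cast lt_add_one _) (le_sInf ?_)
  rintro t ⟨j, rfl, hj⟩
  have : ¬ j ≤ k := fun hc => h j hc hj
  exact_mod_cast Nat.succ_le_of_lt (by omega)

lemma hitTime_lt_iff {Ω : Type*} (X : ℕ → Ω → ℕ) (v w : ℕ) (ω : Ω) :
    hitTime X v ω < hitTime X w ω ↔ ∃ k, X k ω = v ∧ ∀ j ≤ k, X j ω ≠ w := by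
  classical
  constructor
  · intro h
    have hne : ∃ k, X k ω = v := by
      by_contra hc
      push_neg at hc
      have : hitTime X v ω = ⊤ := by
        have : {t : ℕ∞ | ∃ k : ℕ, (k : ℕ∞) = t ∧ X k ω = v} = ∅ := by
          ext t
          simp only [Set.mem_setOf_eq, Set.mem_empty_iff_false, iff_false, not_exists]
          rintro k ⟨rfl, hk⟩
          exact hc k hk
        rw [hitTime, this, sInf_empty]
      rw [this] at h
      exact absurd h not_top_lt
    set k0 := Nat.find hne with hk0
    refine ⟨k0, Nat.find_spec hne, fun j hj hjw => ?_⟩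
    have : hitTime X w ω ≤ (j : ℕ∞) := hitTime_le hjw
    have hlt : hitTime X w ω ≤ (k0 : ℕ∞) := this.trans (by exact_mod_cast hj)
    have hge : (k0 : ℕ∞) ≤ hitTime X v ω := by
      refine le_sInf ?_
      rintro t ⟨i, rfl, hi⟩
      exact_mod_cast Nat.find_min' hne hi
    exact absurd (h.trans_le hlt) (not_lt.2 hge)
  · rintro ⟨k, hk, hall⟩
    exact lt_of_le_of_lt (hitTime_le hk) (lt_hitTime hall)

theorem stmt7 {Ω : Type*} {m0 : MeasurableSpace Ω} (μ : Measure Ω) [IsProbabilityMeasure μ]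
    (F : Filtration ℕ m0) (X : ℕ → Ω → ℕ)
    (ε : ℝ) (hε0 : 0 < ε) (hε : ε < 1 / 2)
    (M N : ℕ) (hM : 1 ≤ M) (hMN : M < N)
    (hadapted : ∀ n : ℕ, Measurable[F n] (X n))
    (h0 : ∀ᵐ ω ∂μ, X 0 ω = M)
    (hstep : ∀ᵐ ω ∂μ, ∀ n : ℕ,
      (1 ≤ X n ω → X (n + 1) ω = X n ω + 1 ∨ X (n + 1) ω + 1 = X n ω) ∧
      (X n ω = 0 → X (n + 1) ω = X n ω + 1))
    (hdrift : ∀ n : ℕ, ∀ᵐ ω ∂μ, M ≤ X n ω →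
      (μ[Set.indicator {ω' | X (n + 1) ω' = X n ω' + 1} (fun _ => (1 : ℝ)) | F n]) ω
        ≤ 1 / 2 - ε) :
    μ {ω | hitTime X N ω < hitTime X (M - 1) ω} ≤
      ENNReal.ofReal ((1 - 2 * ε) ^ (N - M)) := by
  classical
  -- basic real constants
  set c : ℝ := 1 / 2 - ε with hc_def
  have hc0 : 0 < c := by simp only [hc_def]; linarith
  have hc1 : c < 1 := by simp only [hc_def]; linarith
  have h1c : (0:ℝ) < 1 / 2 + ε := by linarith
  set r : ℝ := c / (1 / 2 + ε) with hr_def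
  have hr0 : 0 < r := div_pos hc0 h1c
  have hrle : r ≤ 1 - 2 * ε := by
    rw [hr_def, div_le_iff₀ h1c]
    nlinarith
  have hr1 : r ≤ 1 := by nlinarith
  -- the test function
  set g : ℕ → ℝ := fun x => r ^ (N - x) with hg_def
  have hgpos : ∀ x, 0 < g x := fun x => pow_pos hr0 _
  have hgle1 : ∀ x, g x ≤ 1 := fun x => pow_le_one₀ hr0.le hr1
  have hgmono : ∀ x y : ℕ, x ≤ y → g x ≤ g y := by
    intro x y hxy
    exact pow_le_pow_of_le_one hr0.le hr1 (by omega)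
  have hgkey : ∀ x : ℕ, M ≤ x → x < N → c * g (x + 1) + (1 - c) * g (x - 1) = g x := by
    intro x hMx hxN
    have hx1 : 1 ≤ x := hM.trans hMx
    have e1 : N - x = (N - (x + 1)) + 1 := by omega
    have e2 : N - (x - 1) = (N - (x + 1)) + 2 := by omega
    have hkeyr : c + (1 - c) * r ^ 2 = r := by
      have h1 : (1:ℝ) - c = 1 / 2 + ε := by rw [hc_def]; ring
      rw [h1, hr_def]
      field_simp
      ring
    simp only [hg_def, e1, e2]
    have p1 : r ^ ((N - (x+1)) + 1) = r ^ (N - (x+1)) * r := pow_succ r _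
    have p2 : r ^ ((N - (x+1)) + 2) = r ^ (N - (x+1)) * r ^ 2 := by ring
    rw [p1, p2]
    linear_combination (r ^ (N - (x+1))) * hkeyr
  -- measurability of the process
  have hXm : ∀ n, Measurable (X n) := fun n s hs => F.le n _ (hadapted n hs)
  -- the "not yet stopped" events and the success events
  set A : ℕ → Set Ω := fun n => {ω | ∀ k ≤ n, X k ω ≠ N ∧ X k ω ≠ M - 1} with hA_def
  set S : ℕ → Set Ω := fun n => {ω | ∃ k ≤ n, X k ω = N ∧ ∀ j ≤ k, X j ω ≠ M - 1}
    with hS_def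
  have hAmF : ∀ n, MeasurableSet[F n] (A n) := by
    intro n
    have : A n = ⋂ (k : ℕ) (_ : k ≤ n),
        ((X k ⁻¹' {N})ᶜ ∩ (X k ⁻¹' {M - 1})ᶜ) := by
      ext ω
      simp [hA_def]
    rw [this]
    refine MeasurableSet.iInter fun k => MeasurableSet.iInter fun hk => ?_
    have h1 : MeasurableSet[F k] (X k ⁻¹' {N}) := hadapted k (measurableSet_singleton N)
    have h2 : MeasurableSet[F k] (X k ⁻¹' {M - 1}) := hadapted k (measurableSet_singleton _)
    exact ((F.mono hk _ h1).compl).inter ((F.mono hk _ h2).compl)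
  have hAm : ∀ n, MeasurableSet (A n) := fun n => F.le n _ (hAmF n)
  have hSm : ∀ n, MeasurableSet (S n) := by
    intro n
    have : S n = ⋃ (k : ℕ) (_ : k ≤ n),
        ((X k ⁻¹' {N}) ∩ ⋂ (j : ℕ) (_ : j ≤ k), (X j ⁻¹' {M - 1})ᶜ) := by
      ext ω
      simp only [hS_def, Set.mem_setOf_eq, Set.mem_iUnion, Set.mem_inter_iff,
        Set.mem_preimage, Set.mem_singleton_iff, Set.mem_iInter, Set.mem_compl_iff]
      tauto
    rw [this]
    refine MeasurableSet.iUnion fun k => MeasurableSet.iUnion fun hk => ?_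
    exact (hXm k (measurableSet_singleton N)).inter
      (MeasurableSet.iInter fun j => MeasurableSet.iInter fun hj =>
        (hXm j (measurableSet_singleton _)).compl)
  -- the stopped process
  set Y : ℕ → Ω → ℕ :=
    fun n => Nat.rec (X 0) (fun m Ym ω => if ω ∈ A m then X (m + 1) ω else Ym ω) n
    with hY_def
  have hY0 : Y 0 = X 0 := rfl
  have hY1 : ∀ n ω, Y (n + 1) ω = if ω ∈ A n then X (n + 1) ω else Y n ω := fun n ω => rfl
  have hYmeas : ∀ n, Measurable (Y n) := by
    intro n
    induction n with
    | zero => exact hXm 0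
    | succ n ih =>
      have : Y (n + 1) = (A n).piecewise (X (n + 1)) (Y n) := by
        funext ω; rw [hY1]; rfl
      rw [this]
      exact Measurable.piecewise (hAm n) (hXm (n + 1)) ih
  have hYA : ∀ n ω, ω ∈ A n → Y n ω = X n ω := by
    intro n
    induction n with
    | zero => intro ω _; rfl
    | succ n ih =>
      intro ω hω
      rw [hY1, if_pos]
      intro k hk
      exact hω k (hk.trans (Nat.le_succ n))
  have hYS : ∀ n ω, ω ∈ S n → Y n ω = N := by
    intro n
    induction n with
    | zero =>
      rintro ω ⟨k, hk, hkN, -⟩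
      interval_cases k
      exact hkN
    | succ n ih =>
      rintro ω ⟨k, hk, hkN, hkM⟩
      rw [hY1]
      by_cases hA : ω ∈ A n
      · rw [if_pos hA]
        have hk' : k = n + 1 := by
          by_contra hne
          have hkn : k ≤ n := by omega
          exact (hA k hkn).1 hkN
        rw [← hk']; exact hkN
      · rw [if_neg hA]
        simp only [hA_def, Set.mem_setOf_eq, not_forall] at hA
        obtain ⟨j, hj, hjbad⟩ := hA
        rcases Nat.lt_or_ge n k with hnk | hnk
        · -- k = n+1 > n ≥ j
          have hjN : X j ω = N := by
            by_cases h1 : X j ω = N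
            · exact h1
            · exfalso
              have h2 : X j ω = M - 1 := by tauto
              exact hkM j (by omega) h2
          exact ih ω ⟨j, hj, hjN, fun i hi => hkM i (by omega)⟩
        · exact ih ω ⟨k, hnk, hkN, hkM⟩
  -- good paths stay in [M, N) while not stopped
  have hbnd : ∀ ω, X 0 ω = M →
      (∀ n, (1 ≤ X n ω → X (n + 1) ω = X n ω + 1 ∨ X (n + 1) ω + 1 = X n ω) ∧
        (X n ω = 0 → X (n + 1) ω = X n ω + 1)) →
      ∀ n, (∀ k ≤ n, X k ω ≠ N ∧ X k ω ≠ M - 1) → M ≤ X n ω ∧ X n ω < N := by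
    intro ω h0ω hsω n
    induction n with
    | zero => intro _; rw [h0ω]; exact ⟨le_rfl, hMN⟩
    | succ n ih =>
      intro h
      have hprev := ih fun k hk => h k (hk.trans (Nat.le_succ n))
      have h1 : 1 ≤ X n ω := hM.trans hprev.1
      have hcur := h (n + 1) le_rfl
      rcases (hsω n).1 h1 with hu | hd
      · constructor <;> omega
      · constructor <;> omega
  -- integrability helper
  have hint : ∀ f : Ω → ℝ, Measurable f → (∀ ω, |f ω| ≤ 1) → Integrable f μ := by
    intro f hf hb
    exact (integrable_const (1 : ℝ)).mono' hf.aestronglyMeasurable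
      (Filter.Eventually.of_forall fun ω => by simpa using hb ω)
  have hGood := h0.and hstep
  -- key one-step inequality
  have hkey : ∀ n, ∫ ω, g (Y (n + 1) ω) ∂μ ≤ ∫ ω, g (Y n ω) ∂μ := by
    intro n
    set U : Set Ω := {ω' | X (n + 1) ω' = X n ω' + 1} with hU_def
    have hUm : MeasurableSet U := by
      have : U = {ω | X (n + 1) ω = X n ω + 1} := rfl
      exact measurableSet_eq_fun (hXm (n + 1)) ((hXm n).add_const 1)
    set u : Ω → ℝ := U.indicator (fun _ => (1 : ℝ)) with hu_def
    set φ : Ω → ℝ := (A n).indicator (fun ω => g (X n ω + 1) - g (X n ω - 1)) with hφ_def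
    have hφ_nonneg : ∀ ω, 0 ≤ φ ω := by
      intro ω
      refine Set.indicator_nonneg (fun ω' _ => ?_) ω
      have := hgmono (X n ω' - 1) (X n ω' + 1) (by omega)
      linarith
    have hφ_le1 : ∀ ω, φ ω ≤ 1 := by
      intro ω
      refine Set.indicator_le' (fun ω' _ => ?_) (fun ω' _ => zero_le_one) ω
      have := hgle1 (X n ω' + 1)
      have := hgpos (X n ω' - 1)
      linarith
    have hφm : Measurable[F n] φ := by
      refine Measurable.indicator ?_ (hAmF n)
      exact (measurable_from_top (f := fun x : ℕ => g (x + 1) - g (x - 1))).comp (hadapted n)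
    have hφm0 : Measurable φ := fun s hs => F.le n _ (hφm hs)
    have hum : Measurable u := (measurable_const (a := (1:ℝ))).indicator hUm
    have hu_int : Integrable u μ := hint u hum (fun ω => by
      by_cases h : ω ∈ U <;> simp [hu_def, h])
    have hφu_int : Integrable (φ * u) μ := by
      refine hint _ (hφm0.mul hum) fun ω => ?_
      have h1 : 0 ≤ u ω := Set.indicator_nonneg (fun _ _ => zero_le_one) ω
      have h2 : u ω ≤ 1 := Set.indicator_le' (fun _ _ => le_rfl) (fun _ _ => zero_le_one) ω
      have := hφ_nonneg ω; have := hφ_le1 ω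
      rw [Pi.mul_apply, abs_le]
      constructor <;> nlinarith
    -- decompositions of the integrals
    have hind_int : ∀ (Z : Ω → ℕ) (s : Set Ω), Measurable Z → MeasurableSet s →
        Integrable (s.indicator fun ω => g (Z ω)) μ := by
      intro Z s hZ hs
      refine hint _ (((measurable_from_top (f := g)).comp hZ).indicator hs) fun ω => ?_
      by_cases h : ω ∈ s
      · simp only [Set.indicator_of_mem h]
        rw [abs_le]; exact ⟨by linarith [hgpos (Z ω)], hgle1 (Z ω)⟩
      · simp [Set.indicator_of_notMem h]
    have hint1 : Integrable ((A n).indicator fun ω => g (X (n + 1) ω)) μ :=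
      hind_int _ _ (hXm (n + 1)) (hAm n)
    have hint2 : Integrable ((A n)ᶜ.indicator fun ω => g (Y n ω)) μ :=
      hind_int _ _ (hYmeas n) (hAm n).compl
    have hint3 : Integrable ((A n).indicator fun ω => g (X n ω)) μ :=
      hind_int _ _ (hXm n) (hAm n)
    have hint4 : Integrable ((A n).indicator fun ω => g (X n ω - 1)) μ := by
      have : ((A n).indicator fun ω => g (X n ω - 1)) =
          ((A n).indicator fun ω => g ((fun ω => X n ω - 1) ω)) := rfl
      rw [this]
      exact hind_int _ _ ((measurable_from_top (f := fun x : ℕ => x - 1)).comp (hXm n)) (hAm n)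
    have hd1 : (fun ω => g (Y (n + 1) ω)) =
        fun ω => (A n).indicator (fun ω => g (X (n + 1) ω)) ω +
          (A n)ᶜ.indicator (fun ω => g (Y n ω)) ω := by
      funext ω
      rw [hY1]
      by_cases h : ω ∈ A n
      · simp [Set.indicator_of_mem h, Set.indicator_of_notMem (by simpa using h : ω ∉ (A n)ᶜ), h]
      · simp [Set.indicator_of_notMem h, Set.indicator_of_mem (by simpa using h : ω ∈ (A n)ᶜ), h]
    have hd2 : (fun ω => g (Y n ω)) =
        fun ω => (A n).indicator (fun ω => g (X n ω)) ω +
          (A n)ᶜ.indicator (fun ω => g (Y n ω)) ω := by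
      funext ω
      by_cases h : ω ∈ A n
      · rw [Set.indicator_of_mem h, Set.indicator_of_notMem (by simpa using h), hYA n ω h]
        ring
      · rw [Set.indicator_of_notMem h, Set.indicator_of_mem (by simpa using h)]
        ring
    have eL := (congrArg (integral μ) hd1).trans (integral_add hint1 hint2)
    have eR := (congrArg (integral μ) hd2).trans (integral_add hint3 hint2)
    rw [eL, eR]
    gcongr ?_ + _
    -- main estimate on A n
    have key1 : ((A n).indicator fun ω => g (X (n + 1) ω)) =ᵐ[μ]
        fun ω => (A n).indicator (fun ω => g (X n ω - 1)) ω + φ ω * u ω := by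
      filter_upwards [hGood] with ω hω
      by_cases h : ω ∈ A n
      · have hb := hbnd ω hω.1 hω.2 n (fun k hk => h k hk)
        have h1 : 1 ≤ X n ω := hM.trans hb.1
        rcases (hω.2 n).1 h1 with hu | hd
        · have hU : ω ∈ U := hu
          simp only [Set.indicator_of_mem h, hφ_def, hu_def, Set.indicator_of_mem hU]
          rw [hu]
          ring
        · have hU : ω ∉ U := by
            intro hc
            have : X (n + 1) ω = X n ω + 1 := hc
            omega
          simp only [Set.indicator_of_mem h, hφ_def, hu_def, Set.indicator_of_notMem hU]
          rw [show X (n + 1) ω = X n ω - 1 by omega]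
          ring
      · simp only [hφ_def, Set.indicator_of_notMem h]
        ring
    have e2 : ∫ ω, (A n).indicator (fun ω => g (X (n + 1) ω)) ω ∂μ =
        ∫ ω, ((A n).indicator (fun ω => g (X n ω - 1)) ω + φ ω * u ω) ∂μ := by
      exact integral_congr_ae key1
    have e3 : ∫ ω, ((A n).indicator (fun ω => g (X n ω - 1)) ω + φ ω * u ω) ∂μ =
        ∫ ω, (A n).indicator (fun ω => g (X n ω - 1)) ω ∂μ + ∫ ω, φ ω * u ω ∂μ := by
      exact integral_add hint4 hφu_int
    rw [e2, e3]
    -- conditional expectation step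
    haveI : SigmaFinite (μ.trim (F.le n)) := by infer_instance
    have hpull : μ[φ * u | F n] =ᵐ[μ] φ * μ[u | F n] :=
      condExp_mul_of_stronglyMeasurable_left hφm.stronglyMeasurable hφu_int hu_int
    have hcexp_eq : ∫ ω, φ ω * u ω ∂μ = ∫ ω, φ ω * (μ[u | F n]) ω ∂μ := by
      have h1 := integral_condExp (F.le n) (f := φ * u) (μ := μ)
      have h2 := integral_congr_ae hpull
      exact h1.symm.trans h2
    have hE_int : Integrable (fun ω => φ ω * (μ[u | F n]) ω) μ := by
      have := (integrable_condExp (f := u) (m := F n) (μ := μ)).bdd_mul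
        hφm0.aestronglyMeasurable (c := 1) (Filter.Eventually.of_forall fun ω => by
          rw [Real.norm_eq_abs, abs_le]
          exact ⟨by linarith [hφ_nonneg ω], hφ_le1 ω⟩)
      exact this
    have hφc_int : Integrable (fun ω => φ ω * c) μ := by
      refine hint _ (hφm0.mul_const c) fun ω => ?_
      rw [abs_le]
      constructor <;> nlinarith [hφ_nonneg ω, hφ_le1 ω]
    have hstep2 : ∫ ω, φ ω * (μ[u | F n]) ω ∂μ ≤ ∫ ω, φ ω * c ∂μ := by
      refine integral_mono_ae hE_int hφc_int ?_
      filter_upwards [hGood, hdrift n] with ω hω hdω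
      by_cases h : ω ∈ A n
      · have hb := hbnd ω hω.1 hω.2 n (fun k hk => h k hk)
        have hEle : (μ[u | F n]) ω ≤ c := hdω hb.1
        exact mul_le_mul_of_nonneg_left hEle (hφ_nonneg ω)
      · have : φ ω = 0 := Set.indicator_of_notMem h _
        rw [this, zero_mul, zero_mul]
    have hfinal : ∫ ω, (A n).indicator (fun ω => g (X n ω - 1)) ω ∂μ + ∫ ω, φ ω * c ∂μ =
        ∫ ω, (A n).indicator (fun ω => g (X n ω)) ω ∂μ := by
      rw [← integral_add hint4 hφc_int]
      refine integral_congr_ae ?_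
      filter_upwards [hGood] with ω hω
      by_cases h : ω ∈ A n
      · have hb := hbnd ω hω.1 hω.2 n (fun k hk => h k hk)
        simp only [hφ_def, Set.indicator_of_mem h]
        have := hgkey (X n ω) hb.1 hb.2
        linarith
      · simp only [hφ_def, Set.indicator_of_notMem h]
        ring
    calc ∫ ω, (A n).indicator (fun ω => g (X n ω - 1)) ω ∂μ + ∫ ω, φ ω * u ω ∂μ
        = ∫ ω, (A n).indicator (fun ω => g (X n ω - 1)) ω ∂μ +
            ∫ ω, φ ω * (μ[u | F n]) ω ∂μ := by rw [hcexp_eq]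
      _ ≤ ∫ ω, (A n).indicator (fun ω => g (X n ω - 1)) ω ∂μ + ∫ ω, φ ω * c ∂μ := by
            gcongr
      _ = ∫ ω, (A n).indicator (fun ω => g (X n ω)) ω ∂μ := hfinal
  -- integrability of g ∘ Y n
  have hYint : ∀ n, Integrable (fun ω => g (Y n ω)) μ := by
    intro n
    refine hint _ ((measurable_from_top (f := g)).comp (hYmeas n)) fun ω => ?_
    rw [abs_le]; exact ⟨by linarith [hgpos (Y n ω)], hgle1 (Y n ω)⟩
  -- the integral bound for every n
  have hpow_nonneg : (0:ℝ) ≤ (1 - 2 * ε) ^ (N - M) := pow_nonneg (by linarith) _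
  have hmain : ∀ n, ∫ ω, g (Y n ω) ∂μ ≤ (1 - 2 * ε) ^ (N - M) := by
    have h00 : ∫ ω, g (Y 0 ω) ∂μ ≤ (1 - 2 * ε) ^ (N - M) := by
      have : ∫ ω, g (Y 0 ω) ∂μ = ∫ _ω, g M ∂μ := by
        refine integral_congr_ae ?_
        filter_upwards [h0] with ω hω
        rw [hY0, hω]
      rw [this, integral_const, probReal_univ, one_smul]
      exact pow_le_pow_left₀ hr0.le hrle _
    intro n
    induction n with
    | zero => exact h00
    | succ n ih => exact (hkey n).trans ih
  -- measure of S n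
  have hSn : ∀ n, μ (S n) ≤ ENNReal.ofReal ((1 - 2 * ε) ^ (N - M)) := by
    intro n
    rw [ENNReal.le_ofReal_iff_toReal_le (measure_ne_top μ _) hpow_nonneg]
    have h1 : (μ (S n)).toReal = ∫ ω, (S n).indicator (fun _ => (1:ℝ)) ω ∂μ :=
      (integral_indicator_one (hSm n)).symm
    have h2 : ∫ ω, (S n).indicator (fun _ => (1:ℝ)) ω ∂μ ≤ ∫ ω, g (Y n ω) ∂μ := by
      refine integral_mono ?_ (hYint n) ?_
      · exact hint _ (measurable_const.indicator (hSm n)) fun ω => by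
          by_cases h : ω ∈ S n <;> simp [h]
      · intro ω
        show (S n).indicator (fun _ => (1:ℝ)) ω ≤ g (Y n ω)
        by_cases h : ω ∈ S n
        · rw [Set.indicator_of_mem h, hYS n ω h]
          simp [hg_def]
        · rw [Set.indicator_of_notMem h]
          exact (hgpos _).le
    rw [h1]
    exact h2.trans (hmain n)
  -- assemble
  have hset : {ω | hitTime X N ω < hitTime X (M - 1) ω} = ⋃ n, S n := by
    ext ω
    rw [Set.mem_setOf_eq, hitTime_lt_iff]
    simp only [Set.mem_iUnion, hS_def, Set.mem_setOf_eq]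
    constructor
    · rintro ⟨k, hk, hall⟩
      exact ⟨k, k, le_rfl, hk, hall⟩
    · rintro ⟨n, k, hkn, hk, hall⟩
      exact ⟨k, hk, hall⟩
  have hmono : Monotone S := by
    intro a b hab ω
    rintro ⟨k, hk, h1, h2⟩
    exact ⟨k, hk.trans hab, h1, h2⟩
  rw [hset, hmono.measure_iUnion]
  exact iSup_le hSn
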